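/- Discrete l'Hospital monotonicity rule, case ρ nondecreasing and g·Δg < 0: if ρ is nondecreasing on [a+1,b] (ρ(n) ≤ ρ(n+1) whenever a+1 ≤ n ≤ n+1 ≤ b) and g(n)·Δg(n) < 0 for all n ∈ [a+1,b], then there exists k ∈ [a,b] such that r is nondecreasing on [a,k] (r(n−1) ≤ r(n) for all n with a+1 ≤ n ≤ k) and nonincreasing on [k,b] (r(n−1) ≥ r(n) for all n with k+1 ≤ n ≤ b). -/

import Mathlib

lemma aux_div_lt_iff {x y p q : ℝ} (h : 0 < p * q) : x / p < y / q ↔ x * q < y * p := by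
  have hp : p ≠ 0 := by rintro rfl; simp at h
  have hq : q ≠ 0 := by rintro rfl; simp at h
  have h1 : (x / p) * (p * q) = x * q := by field_simp
  have h2 : (y / q) * (p * q) = y * p := by field_simp
  rw [← mul_lt_mul_iff_left₀ h, h1, h2]

lemma aux_div_le_iff {x y p q : ℝ} (h : 0 < p * q) : x / p ≤ y / q ↔ x * q ≤ y * p := by
  have hp : p ≠ 0 := by rintro rfl; simp at h
  have hq : q ≠ 0 := by rintro rfl; simp at h
  have h1 : (x / p) * (p * q) = x * q := by field_simp
  have h2 : (y / q) * (p * q) = y * p := by field_simp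
  rw [← mul_le_mul_iff_left₀ h, h1, h2]

lemma aux_core (fn1 fn fn2 G' G G'' : ℝ)
    (h1 : fn * G' < fn1 * G)
    (h2 : (fn - fn1) * (G'' - G) ≤ (fn2 - fn) * (G - G'))
    (h5 : G * (G - G') < 0)
    (h7 : 0 < (G - G') * (G'' - G)) :
    fn2 * G < fn * G'' := by
  nlinarith [mul_pos h7 h7, sq_nonneg (G - G'), sq_nonneg (G'' - G),
    mul_lt_mul_of_pos_right h1 h7, h2, mul_self_nonneg G]

/-- Discrete l'Hospital monotonicity rule, case ρ nondecreasing and g·Δg < 0. -/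
theorem discrete_lhospital_monotone_rule_case3
    (a b : ℤ) (hab : a ≤ b) (f g : ℤ → ℝ)
    (hg : ∀ n : ℤ, a ≤ n → n ≤ b → g n ≠ 0)
    (hgsign : ∀ n m : ℤ, a ≤ n → n ≤ b → a ≤ m → m ≤ b → 0 < g n * g m)
    (hΔg : ∀ n : ℤ, a + 1 ≤ n → n ≤ b → g n - g (n - 1) ≠ 0)
    (hΔgsign : ∀ n m : ℤ, a + 1 ≤ n → n ≤ b → a + 1 ≤ m → m ≤ b →
      0 < (g n - g (n - 1)) * (g m - g (m - 1)))
    (hρ : ∀ n : ℤ, a + 1 ≤ n → n + 1 ≤ b →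
      (f n - f (n - 1)) / (g n - g (n - 1)) ≤ (f (n + 1) - f n) / (g (n + 1) - g n))
    (hgΔg : ∀ n : ℤ, a + 1 ≤ n → n ≤ b → g n * (g n - g (n - 1)) < 0) :
    ∃ k : ℤ, a ≤ k ∧ k ≤ b ∧
      (∀ n : ℤ, a + 1 ≤ n → n ≤ k → f (n - 1) / g (n - 1) ≤ f n / g n) ∧
      (∀ n : ℤ, k + 1 ≤ n → n ≤ b → f n / g n ≤ f (n - 1) / g (n - 1)) := by
  -- one-step propagation of strict decrease
  have step : ∀ n : ℤ, a + 1 ≤ n → n + 1 ≤ b →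
      f n / g n < f (n - 1) / g (n - 1) → f (n + 1) / g (n + 1) < f n / g n := by
    intro n hn hnb hlt
    have hGG' : 0 < g n * g (n - 1) := hgsign n (n - 1) (by omega) (by omega) (by omega) (by omega)
    have hG''G : 0 < g (n + 1) * g n := hgsign (n + 1) n (by omega) (by omega) (by omega) (by omega)
    have hDD' : 0 < (g n - g (n - 1)) * (g (n + 1) - g ((n + 1) - 1)) :=
      hΔgsign n (n + 1) (by omega) (by omega) (by omega) (by omega)
    have hsimp : (n : ℤ) + 1 - 1 = n := by omega
    rw [hsimp] at hDD'
    have h5 : g n * (g n - g (n - 1)) < 0 := hgΔg n (by omega) (by omega)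
    have h1 : f n * g (n - 1) < f (n - 1) * g n := (aux_div_lt_iff hGG').mp hlt
    have hρ' := hρ n hn hnb
    have h2 : (f n - f (n - 1)) * (g (n + 1) - g n) ≤
        (f (n + 1) - f n) * (g n - g (n - 1)) := by
      have := (aux_div_le_iff (x := f n - f (n - 1)) (y := f (n + 1) - f n) hDD').mp hρ'
      linarith [this]
    have key : f (n + 1) * g n < f n * g (n + 1) :=
      aux_core (f (n - 1)) (f n) (f (n + 1)) (g (n - 1)) (g n) (g (n + 1)) h1 h2 h5 hDD'
    exact (aux_div_lt_iff hG''G).mpr key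
  -- strict decrease propagates to all later points
  have prop : ∀ m : ℤ, a + 1 ≤ m → f m / g m < f (m - 1) / g (m - 1) →
      ∀ n : ℤ, m ≤ n → n ≤ b → f n / g n < f (n - 1) / g (n - 1) := by
    intro m hm hPm n hmn
    refine Int.le_induction (motive := fun n _ => n ≤ b → f n / g n < f (n - 1) / g (n - 1))
      (fun _ => hPm) ?_ n hmn
    intro n hmn ih hnb
    have hn1 : n + 1 - 1 = n := by omega
    rw [hn1]
    exact step n (by omega) hnb (ih (by omega))
  by_cases hex : ∃ n : ℤ, (a + 1 ≤ n ∧ n ≤ b) ∧ f n / g n < f (n - 1) / g (n - 1)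
  · -- take least such n₀, k = n₀ - 1
    obtain ⟨n₀, ⟨⟨hn₀a, hn₀b⟩, hP₀⟩, hleast⟩ :=
      Int.exists_least_of_bdd (P := fun n => (a + 1 ≤ n ∧ n ≤ b) ∧
        f n / g n < f (n - 1) / g (n - 1)) ⟨a + 1, fun z hz => hz.1.1⟩ hex
    refine ⟨n₀ - 1, by omega, by omega, ?_, ?_⟩
    · intro n hn hnk
      by_contra hcon
      push_neg at hcon
      have := hleast n ⟨⟨hn, by omega⟩, hcon⟩
      omega
    · intro n hn hnb
      have hkn : n₀ ≤ n := by omega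
      exact le_of_lt (prop n₀ hn₀a hP₀ n hkn hnb)
  · refine ⟨b, hab, le_refl b, ?_, ?_⟩
    · intro n hn hnb
      by_contra hcon
      push_neg at hcon
      exact hex ⟨n, ⟨hn, hnb⟩, hcon⟩
    · intro n hn hnb; omega
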